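/- Let n ≥ 2 and let π be a non-identity permutation of {1,…,n}. If a monoid M satisfies the permutation identity x₁x₂⋯xₙ = x_{π(1)}x_{π(2)}⋯x_{π(n)} for all x₁,…,xₙ ∈ M, then M is commutative. -/

import Mathlib

private lemma prod_ofFn_single {M : Type*} [Monoid M] :
    ∀ (n : ℕ) (w : Fin n) (b : M),
      (List.ofFn fun k => if k = w then b else 1).prod = b := by
  intro n
  induction n with
  | zero => exact fun w => w.elim0
  | succ n ih =>
    intro w b
    induction w using Fin.cases with
    | zero =>
      rw [List.ofFn_succ]
      simp [Fin.succ_ne_zero, List.prod_eq_one]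
    | succ j =>
      rw [List.ofFn_succ]
      simp only [Fin.succ_inj, (Fin.succ_ne_zero j).symm, if_false, List.prod_cons, one_mul]
      exact ih j b

private lemma prod_ofFn_pair {M : Type*} [Monoid M] :
    ∀ (n : ℕ) (u v : Fin n), u < v → ∀ (a b : M),
      (List.ofFn fun k => if k = u then a else if k = v then b else 1).prod = a * b := by
  intro n
  induction n with
  | zero => exact fun u => u.elim0
  | succ n ih =>
    intro u v huv a b
    induction u using Fin.cases with
    | zero =>
      have hv : v ≠ 0 := Fin.pos_iff_ne_zero.mp huv
      obtain ⟨j, rfl⟩ := Fin.exists_succ_eq.mpr hv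
      rw [List.ofFn_succ]
      simp only [if_pos rfl, List.prod_cons, Fin.succ_ne_zero, if_false, Fin.succ_inj, if_true]
      rw [prod_ofFn_single]
    | succ i =>
      have hv : v ≠ 0 := Fin.pos_iff_ne_zero.mp (Fin.succ_pos i |>.trans huv)
      obtain ⟨j, rfl⟩ := Fin.exists_succ_eq.mpr hv
      rw [List.ofFn_succ]
      simp only [(Fin.succ_ne_zero i).symm, (Fin.succ_ne_zero j).symm, if_false,
        List.prod_cons, one_mul, Fin.succ_inj]
      exact ih i j (Fin.succ_lt_succ_iff.mp huv) a b

/-- If a monoid satisfies a permutation identity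
`x₁x₂⋯xₙ ≈ x_{π(1)}x_{π(2)}⋯x_{π(n)}` for some `n ≥ 2` and a non-identity
permutation `π`, then it is commutative. -/
theorem perm_identity_implies_commutative {M : Type*} [Monoid M]
    (n : ℕ) (hn : 2 ≤ n) (π : Equiv.Perm (Fin n)) (hπ : π ≠ 1)
    (h : ∀ f : Fin n → M, (List.ofFn f).prod = (List.ofFn (fun i => f (π i))).prod) :
    ∀ a b : M, a * b = b * a := by
  -- π has an inversion
  have hinv : ∃ s t : Fin n, s < t ∧ π t < π s := by
    by_contra hc
    push_neg at hc
    have hmono : StrictMono π := by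
      intro s t hst
      rcases lt_or_eq_of_le (hc s t hst) with h' | h'
      · exact h'
      · exact absurd (π.injective h') (ne_of_lt hst)
    have : (π : Fin n → Fin n) = id := by
      have inst : WellFoundedLT (Fin n) := inferInstance
      have := @StrictMono.range_inj (Fin n) (Fin n) _ _ inst _ _ hmono strictMono_id
      rw [Set.range_eq_univ.mpr π.surjective, Set.range_eq_univ.mpr
        Function.surjective_id] at this
      simpa using this.mp rfl
    exact hπ (Equiv.ext fun i => congrFun this i)
  obtain ⟨s, t, hst, hts⟩ := hinv
  intro a b
  set f : Fin n → M := fun k => if k = π t then a else if k = π s then b else 1 with hf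
  have hL : (List.ofFn f).prod = a * b := prod_ofFn_pair n (π t) (π s) hts a b
  have hfun : (fun i => f (π i)) = fun i => if i = s then b else if i = t then a else 1 := by
    funext i
    simp only [hf, EmbeddingLike.apply_eq_iff_eq]
    rcases eq_or_ne i s with rfl | his
    · simp [ne_of_lt hst]
    · rcases eq_or_ne i t with rfl | hit
      · simp [(ne_of_lt hst).symm]
      · simp [his, hit]
  have hR : (List.ofFn fun i => f (π i)).prod = b * a := by
    rw [hfun]
    exact prod_ofFn_pair n s t hst b a
  rw [← hL, ← hR]
  exact h f
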